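/- Fix n : ℕ and let ω = exp(πi/4) ∈ ℂ. Let G_n be the subgroup of invertible linear operators on ℂ^{(Fin n → ZMod 2)} generated by the scalar operator ω • 1 together with: T_i (i : Fin n) with T_i e_x = ω^{(x i).val} • e_x; X_i with X_i e_x = e_{Function.update x i (x i + 1)}; and CNOT_{i,j} (i ≠ j) with CNOT_{i,j} e_x = e_{Function.update x j (x i + x j)}. Then for every function p : (Fin n → ZMod 2) → ZMod 8 and every bijective affine map f : (Fin n → ZMod 2) → (Fin n → ZMod 2) over ZMod 2, the operator W defined by W e_x = ω^{(p x).val} • e_{f x} belongs to G_n, provided p is a phase normal form (i.e., p x = a₀ + ∑_i (a i)·⟨x i⟩ + ∑_{i<j} ⟨b i j⟩·⟨x i + x j⟩ + ∑_{i<j<k} ⟨c i j k⟩·⟨x i + x j + x k⟩ for some data a₀ : ZMod 8, a : Fin n → ZMod 8, b on pairs i<j valued in ZMod 4, c on triples i<j<k valued in ZMod 2). -/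

import Mathlib

open scoped BigOperators

noncomputable section

/-- The `n`-qubit state space `ℂ^(Fin n → ZMod 2)`. -/
abbrev QState (n : ℕ) := (Fin n → ZMod 2) → ℂ

/-- The standard basis vector `e x`. -/
def e {n : ℕ} (x : Fin n → ZMod 2) : QState n := Pi.single x 1

/-- `ω = exp (π i / 4)`. -/
def ω : ℂ := Complex.exp (Real.pi * Complex.I / 4)

/-- The generators of the group of `n`-qubit CNOT-dihedral operators: the scalar `ω • 1`,
the `T` gates, the `X` gates, and the `CNOT` gates, each specified by its action on the
standard basis vectors. -/
def dihedralGens (n : ℕ) : Set (LinearMap.GeneralLinearGroup ℂ (QState n)) :=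
  {W | ∀ x, W.val (e x) = ω • e x} ∪
  {W | ∃ i : Fin n, ∀ x, W.val (e x) = ω ^ (x i).val • e x} ∪
  {W | ∃ i : Fin n, ∀ x, W.val (e x) = e (Function.update x i (x i + 1))} ∪
  {W | ∃ i j : Fin n, i ≠ j ∧ ∀ x, W.val (e x) = e (Function.update x j (x i + x j))}

/-- The group `G_n` of `n`-qubit CNOT-dihedral operators. -/
def dihedralGroup' (n : ℕ) : Subgroup (LinearMap.GeneralLinearGroup ℂ (QState n)) :=
  Subgroup.closure (dihedralGens n)

/-- The type of pairs `i < j` in `Fin n`. -/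
abbrev Pair (n : ℕ) := {p : Fin n × Fin n // p.1 < p.2}

/-- The type of triples `i < j < k` in `Fin n`. -/
abbrev Triple (n : ℕ) := {t : Fin n × Fin n × Fin n // t.1 < t.2.1 ∧ t.2.1 < t.2.2}

/-- The phase normal form with data `(a₀, a, b, c)`, as a function
`(Fin n → ZMod 2) → ZMod 8`. Here `⟨·⟩` is realized by casting `.val` into `ZMod 8`. -/
def pnf {n : ℕ} (a₀ : ZMod 8) (a : Fin n → ZMod 8) (b : Pair n → ZMod 4)
    (c : Triple n → ZMod 2) (x : Fin n → ZMod 2) : ZMod 8 :=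
  a₀ + ∑ i : Fin n, a i * ((x i).val : ZMod 8)
    + ∑ p : Pair n, ((b p).val : ZMod 8) * ((x p.val.1 + x p.val.2).val : ZMod 8)
    + ∑ t : Triple n,
        ((c t).val : ZMod 8) * ((x t.val.1 + x t.val.2.1 + x t.val.2.2).val : ZMod 8)

section Aux

open Matrix

variable {n : ℕ}

lemma ω_ne_zero : ω ≠ 0 := Complex.exp_ne_zero _

/-- `ω` as a unit of `ℂ`. -/
def ωu : ℂˣ := Units.mk0 ω ω_ne_zero

@[simp] lemma ωu_val : ((ωu : ℂˣ) : ℂ) = ω := rfl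

lemma ω_pow_eight : ω ^ 8 = 1 := by
  rw [ω, ← Complex.exp_nat_mul]
  rw [show ((8 : ℕ) : ℂ) * (Real.pi * Complex.I / 4) = 2 * Real.pi * Complex.I by push_cast; ring]
  exact Complex.exp_two_pi_mul_I

lemma ωu_pow_eight : (ωu : ℂˣ) ^ 8 = 1 := by
  ext
  simpa using ω_pow_eight

lemma ωu_pow_mod (m : ℕ) : (ωu : ℂˣ) ^ (m % 8) = ωu ^ m := by
  conv_rhs => rw [← Nat.div_add_mod m 8]
  rw [pow_add, pow_mul, ωu_pow_eight, one_pow, one_mul]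

lemma ωu_pow_val_add (u v : ZMod 8) : (ωu : ℂˣ) ^ (u + v).val = ωu ^ u.val * ωu ^ v.val := by
  rw [← pow_add, ZMod.val_add, ωu_pow_mod]

/-- The linear automorphism of `QState n` permuting basis vectors by `g` with phases `q`. -/
def Uop (g : Equiv.Perm (Fin n → ZMod 2)) (q : (Fin n → ZMod 2) → ℂˣ) :
    QState n ≃ₗ[ℂ] QState n where
  toFun v := fun y => (q (g.symm y) : ℂ) * v (g.symm y)
  map_add' u v := by funext y; simp [mul_add]
  map_smul' c v := by funext y; simp; ring
  invFun v := fun y => ((q y)⁻¹ : ℂˣ) * v (g y)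
  left_inv v := by funext y; simp
  right_inv v := by funext y; simp

/-- `Uop` as an element of the general linear group. -/
def Ugl (g : Equiv.Perm (Fin n → ZMod 2)) (q : (Fin n → ZMod 2) → ℂˣ) :
    LinearMap.GeneralLinearGroup ℂ (QState n) :=
  ⟨(Uop g q).toLinearMap, (Uop g q).symm.toLinearMap,
    by ext v; simp [Module.End.mul_apply],
    by ext v; simp [Module.End.mul_apply]⟩

lemma Ugl_val_apply (g : Equiv.Perm (Fin n → ZMod 2)) (q : (Fin n → ZMod 2) → ℂˣ)
    (x : Fin n → ZMod 2) : (Ugl g q).val (e x) = (q x : ℂ) • e (g x) := by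
  funext y
  show (q (g.symm y) : ℂ) * (e x) (g.symm y) = ((q x : ℂ) • e (g x)) y
  simp only [e, Pi.smul_apply, smul_eq_mul, Pi.single_apply]
  by_cases h : y = g x
  · subst h; simp
  · have h1 : ¬ (g.symm y = x) := fun hx => h (by rw [← hx, Equiv.apply_symm_apply])
    simp [h1, h]

/-- `A` acts on basis vectors by permutation `g` with phases `q`. -/
def Acts (A : LinearMap.GeneralLinearGroup ℂ (QState n))
    (g : (Fin n → ZMod 2) → (Fin n → ZMod 2)) (q : (Fin n → ZMod 2) → ℂˣ) : Prop :=
  ∀ x, A.val (e x) = (q x : ℂ) • e (g x)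

lemma acts_Ugl (g : Equiv.Perm (Fin n → ZMod 2)) (q) : Acts (Ugl g q) g q :=
  fun x => Ugl_val_apply g q x

lemma acts_mul {A B : LinearMap.GeneralLinearGroup ℂ (QState n)} {ga gb qa qb}
    (ha : Acts A ga qa) (hb : Acts B gb qb) :
    Acts (A * B) (fun x => ga (gb x)) (fun x => qa (gb x) * qb x) := by
  intro x
  show (A * B).val (e x) = ((qa (gb x) * qb x : ℂˣ) : ℂ) • e (ga (gb x))
  rw [Units.val_mul, Module.End.mul_apply, hb x, LinearMap.map_smul, ha (gb x), smul_smul,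
    Units.val_mul, mul_comm]

lemma acts_one : Acts (1 : LinearMap.GeneralLinearGroup ℂ (QState n)) id 1 := by
  intro x
  simp

lemma gl_ext {A B : LinearMap.GeneralLinearGroup ℂ (QState n)}
    (h : ∀ x, A.val (e x) = B.val (e x)) : A = B := by
  apply Units.ext
  apply (Pi.basisFun ℂ (Fin n → ZMod 2)).ext
  intro x
  simpa [e] using h x

lemma acts_eq {A B : LinearMap.GeneralLinearGroup ℂ (QState n)} {g g' q q'}
    (ha : Acts A g q) (hb : Acts B g' q') (hg : ∀ x, g x = g' x) (hq : ∀ x, q x = q' x) :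
    A = B := by
  apply gl_ext
  intro x
  rw [ha x, hb x, hg x, hq x]

/-- Diagonal phase operator. -/
def phaseOp (q : (Fin n → ZMod 2) → ZMod 8) : LinearMap.GeneralLinearGroup ℂ (QState n) :=
  Ugl (Equiv.refl _) (fun x => ωu ^ (q x).val)

lemma acts_phaseOp (q : (Fin n → ZMod 2) → ZMod 8) :
    Acts (phaseOp q) id (fun x => ωu ^ (q x).val) := acts_Ugl _ _

lemma phaseOp_apply (q : (Fin n → ZMod 2) → ZMod 8) (x : Fin n → ZMod 2) :
    (phaseOp q).val (e x) = (((ωu : ℂˣ) ^ (q x).val : ℂˣ) : ℂ) • e x := acts_phaseOp q x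

lemma phaseOp_zero : phaseOp (n := n) (fun _ => 0) = 1 := by
  apply acts_eq (acts_phaseOp _) acts_one (fun x => rfl)
  intro x
  simp [ZMod.val_zero]

lemma phaseOp_add (q r : (Fin n → ZMod 2) → ZMod 8) :
    phaseOp (fun x => q x + r x) = phaseOp q * phaseOp r := by
  apply acts_eq (acts_phaseOp _) (acts_mul (acts_phaseOp q) (acts_phaseOp r)) (fun x => rfl)
  intro x
  exact ωu_pow_val_add _ _

/-- Translation operator. -/
def transOp (v : Fin n → ZMod 2) : LinearMap.GeneralLinearGroup ℂ (QState n) :=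
  Ugl (Equiv.addLeft v) 1

lemma acts_transOp (v : Fin n → ZMod 2) : Acts (transOp v) (fun x => v + x) 1 := acts_Ugl _ _

/-- Permutation operator. -/
def permOp (g : Equiv.Perm (Fin n → ZMod 2)) : LinearMap.GeneralLinearGroup ℂ (QState n) :=
  Ugl g 1

lemma acts_permOp (g : Equiv.Perm (Fin n → ZMod 2)) : Acts (permOp g) g 1 := acts_Ugl _ _

lemma permOp_mul (g h : Equiv.Perm (Fin n → ZMod 2)) :
    permOp (g * h) = permOp g * permOp h := by
  apply acts_eq (acts_permOp _) (acts_mul (acts_permOp g) (acts_permOp h))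
  · intro x; rfl
  · intro x; simp

lemma permOp_one : permOp (n := n) 1 = 1 := by
  apply acts_eq (acts_permOp _) acts_one <;> intro x <;> rfl

/- Membership of the generators -/

lemma scalar_mem : phaseOp (n := n) (fun _ => 1) ∈ dihedralGroup' n := by
  apply Subgroup.subset_closure
  refine Or.inl (Or.inl (Or.inl ?_))
  intro x
  rw [phaseOp_apply]
  have h1 : (1 : ZMod 8).val = 1 := rfl
  simp [h1]

lemma Tgate_mem (i : Fin n) :
    phaseOp (fun x => (((x i).val : ℕ) : ZMod 8)) ∈ dihedralGroup' n := by
  apply Subgroup.subset_closure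
  refine Or.inl (Or.inl (Or.inr ⟨i, ?_⟩))
  intro x
  rw [phaseOp_apply]
  have hlt : (x i).val < 8 := lt_trans (ZMod.val_lt _) (by norm_num)
  have hv : ((((x i).val : ℕ) : ZMod 8)).val = (x i).val := by
    rw [ZMod.val_natCast, Nat.mod_eq_of_lt hlt]
  rw [hv]
  simp [Units.val_pow_eq_pow_val]

lemma Xgate_mem (i : Fin n) :
    transOp (Pi.single i (1 : ZMod 2)) ∈ dihedralGroup' n := by
  apply Subgroup.subset_closure
  refine Or.inl (Or.inr ⟨i, ?_⟩)
  intro x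
  rw [acts_transOp _ x]
  have : Pi.single i (1 : ZMod 2) + x = Function.update x i (x i + 1) := by
    funext k
    by_cases hk : k = i
    · subst hk; simp [add_comm]
    · simp [hk, Pi.single_apply]
  simp [this]

/-- The CNOT permutation with control `i` and target `j`. -/
def cnotPerm (i j : Fin n) (hij : i ≠ j) : Equiv.Perm (Fin n → ZMod 2) :=
  Function.Involutive.toPerm (fun x => Function.update x j (x i + x j)) (by
    intro x
    simp only [Function.update_idem, Function.update_self,
      Function.update_of_ne hij]
    have : x i + (x i + x j) = x j := by
      rw [← add_assoc]
      simp [CharTwo.add_self_eq_zero]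
    rw [this, Function.update_eq_self])

lemma cnotPerm_apply (i j : Fin n) (hij : i ≠ j) (x : Fin n → ZMod 2) :
    cnotPerm i j hij x = Function.update x j (x i + x j) := rfl

lemma cnotPerm_invol (i j : Fin n) (hij : i ≠ j) (x : Fin n → ZMod 2) :
    cnotPerm i j hij (cnotPerm i j hij x) = x :=
  (cnotPerm i j hij).symm_apply_apply x

lemma cnot_mem (i j : Fin n) (hij : i ≠ j) :
    permOp (cnotPerm i j hij) ∈ dihedralGroup' n := by
  apply Subgroup.subset_closure
  refine Or.inr ⟨i, j, hij, ?_⟩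
  intro x
  rw [acts_permOp _ x]
  simp [cnotPerm_apply]

/- derived membership lemmas for phase operators -/

lemma phase_add_mem {q r : (Fin n → ZMod 2) → ZMod 8}
    (hq : phaseOp q ∈ dihedralGroup' n) (hr : phaseOp r ∈ dihedralGroup' n) :
    phaseOp (fun x => q x + r x) ∈ dihedralGroup' n := by
  rw [phaseOp_add]
  exact mul_mem hq hr

lemma phase_nsmul_mem (k : ℕ) {q : (Fin n → ZMod 2) → ZMod 8}
    (hq : phaseOp q ∈ dihedralGroup' n) :
    phaseOp (fun x => (k : ZMod 8) * q x) ∈ dihedralGroup' n := by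
  induction k with
  | zero => simpa [phaseOp_zero] using one_mem (dihedralGroup' n)
  | succ m ih =>
      have : (fun x => ((m + 1 : ℕ) : ZMod 8) * q x)
          = fun x => ((m : ℕ) : ZMod 8) * q x + q x := by
        funext x; push_cast; ring
      rw [this]
      exact phase_add_mem ih hq

lemma phase_coeff_mem (k : ZMod 8) {q : (Fin n → ZMod 2) → ZMod 8}
    (hq : phaseOp q ∈ dihedralGroup' n) :
    phaseOp (fun x => k * q x) ∈ dihedralGroup' n := by
  have : (fun x => k * q x) = fun x => ((k.val : ℕ) : ZMod 8) * q x := by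
    funext x
    rw [ZMod.natCast_rightInverse k]
  rw [this]
  exact phase_nsmul_mem k.val hq

lemma phase_sum_mem {ι : Type*} (s : Finset ι) (F : ι → (Fin n → ZMod 2) → ZMod 8)
    (h : ∀ i ∈ s, phaseOp (F i) ∈ dihedralGroup' n) :
    phaseOp (fun x => ∑ i ∈ s, F i x) ∈ dihedralGroup' n := by
  classical
  induction s using Finset.cons_induction with
  | empty => simpa [phaseOp_zero] using one_mem (dihedralGroup' n)
  | cons a s ha ih =>
      simp only [Finset.sum_cons]
      exact phase_add_mem (h a (Finset.mem_cons_self a s))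
        (ih (fun i hi => h i (Finset.mem_cons_of_mem hi)))

/-- The two-qubit phase `⟨x i + x j⟩` via conjugating a `T` gate by a CNOT. -/
lemma pair_phase_mem (i j : Fin n) (hij : i ≠ j) :
    phaseOp (fun x => (((x i + x j).val : ℕ) : ZMod 8)) ∈ dihedralGroup' n := by
  have hC := cnot_mem i j hij
  have hT := Tgate_mem j
  have hmem : permOp (cnotPerm i j hij) * phaseOp (fun x => (((x j).val : ℕ) : ZMod 8))
      * permOp (cnotPerm i j hij) ∈ dihedralGroup' n := mul_mem (mul_mem hC hT) hC
  have hacts := acts_mul (acts_mul (acts_permOp (cnotPerm i j hij))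
    (acts_phaseOp (fun x => (((x j).val : ℕ) : ZMod 8)))) (acts_permOp (cnotPerm i j hij))
  have heq : phaseOp (fun x => (((x i + x j).val : ℕ) : ZMod 8))
      = permOp (cnotPerm i j hij) * phaseOp (fun x => (((x j).val : ℕ) : ZMod 8))
        * permOp (cnotPerm i j hij) := by
    apply acts_eq (acts_phaseOp _) hacts
    · intro x
      simp only [id_eq]
      exact (cnotPerm_invol i j hij x).symm
    · intro x
      simp only [Pi.one_apply, one_mul, mul_one, id_eq, cnotPerm_apply, Function.update_self]
  rw [heq]
  exact hmem

/-- The three-qubit phase `⟨x i + x j + x k⟩`. -/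
lemma triple_phase_mem (i j k : Fin n) (hik : i ≠ k) (hjk : j ≠ k) :
    phaseOp (fun x => (((x i + x j + x k).val : ℕ) : ZMod 8)) ∈ dihedralGroup' n := by
  have hC1 := cnot_mem i k hik
  have hC2 := cnot_mem j k hjk
  have hT := Tgate_mem k
  set C1 := permOp (cnotPerm i k hik) with hC1def
  set C2 := permOp (cnotPerm j k hjk) with hC2def
  set T := phaseOp (fun x => (((x k).val : ℕ) : ZMod 8)) with hTdef
  have hmem : C1 * C2 * T * C2 * C1 ∈ dihedralGroup' n :=
    mul_mem (mul_mem (mul_mem (mul_mem hC1 hC2) hT) hC2) hC1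
  have hacts := acts_mul (acts_mul (acts_mul (acts_mul (acts_permOp (cnotPerm i k hik))
    (acts_permOp (cnotPerm j k hjk))) (acts_phaseOp (fun x => (((x k).val : ℕ) : ZMod 8))))
    (acts_permOp (cnotPerm j k hjk))) (acts_permOp (cnotPerm i k hik))
  have heq : phaseOp (fun x => (((x i + x j + x k).val : ℕ) : ZMod 8)) = C1 * C2 * T * C2 * C1 := by
    apply acts_eq (acts_phaseOp _) hacts
    · intro x
      simp only [id_eq]
      rw [cnotPerm_invol j k hjk, cnotPerm_invol i k hik]
    · intro x
      have h2 : (cnotPerm j k hjk) ((cnotPerm i k hik) x) k = x i + x j + x k := by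
        simp only [cnotPerm_apply, Function.update_self]
        rw [Function.update_of_ne hjk]
        ring
      simp only [Pi.one_apply, one_mul, mul_one, id_eq]
      rw [h2]
  rw [heq]
  exact hmem

/- translations -/

lemma transOp_zero : transOp (n := n) 0 = 1 := by
  apply acts_eq (acts_transOp _) acts_one
  · intro x; simp
  · intro x; rfl

lemma transOp_add (v w : Fin n → ZMod 2) : transOp (v + w) = transOp v * transOp w := by
  apply acts_eq (acts_transOp _) (acts_mul (acts_transOp v) (acts_transOp w))
  · intro x; simp [add_assoc]
  · intro x; simp

lemma trans_mem (v : Fin n → ZMod 2) : transOp v ∈ dihedralGroup' n := by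
  have hv : v = ∑ i : Fin n, Pi.single i (v i) := (Finset.univ_sum_single v).symm
  rw [hv]
  refine Finset.sum_induction _ (fun w => transOp w ∈ dihedralGroup' n) ?_ ?_ ?_
  · intro a b ha hb
    rw [transOp_add]
    exact mul_mem ha hb
  · simpa [transOp_zero] using one_mem (dihedralGroup' n)
  · intro i _
    have h01 : v i = 0 ∨ v i = 1 := by
      have : ∀ a : ZMod 2, a = 0 ∨ a = 1 := by decide
      exact this (v i)
    rcases h01 with h | h
    · rw [h]
      simpa [Pi.single_zero, transOp_zero] using one_mem (dihedralGroup' n)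
    · rw [h]
      exact Xgate_mem i

/- linear automorphisms via transvections -/

lemma matrix_perm_mem (M : Matrix (Fin n) (Fin n) (ZMod 2)) (hM : M.det ≠ 0) :
    ∀ g : Equiv.Perm (Fin n → ZMod 2), (∀ x, g x = M.mulVec x) →
      permOp g ∈ dihedralGroup' n := by
  apply Matrix.diagonal_transvection_induction_of_det_ne_zero
    (P := fun N => ∀ g : Equiv.Perm (Fin n → ZMod 2), (∀ x, g x = N.mulVec x) →
      permOp g ∈ dihedralGroup' n) M hM
  · -- diagonal
    intro D hD g hg
    have hD1 : ∀ i, D i = 1 := by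
      intro i
      have hne : D i ≠ 0 := by
        intro h0
        apply hD
        rw [Matrix.det_diagonal]
        exact Finset.prod_eq_zero (Finset.mem_univ i) h0
      revert hne
      have : ∀ a : ZMod 2, a ≠ 0 → a = 1 := by decide
      exact this (D i)
    have hDone : Matrix.diagonal D = 1 := by
      rw [show D = fun _ => 1 from funext hD1]
      exact Matrix.diagonal_one
    have hgid : g = 1 := by
      apply Equiv.ext
      intro x
      rw [hg x, hDone, Matrix.one_mulVec]
      rfl
    rw [hgid, permOp_one]
    exact one_mem _
  · -- transvection
    intro t g hg
    have h01 : t.c = 0 ∨ t.c = 1 := by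
      have : ∀ a : ZMod 2, a = 0 ∨ a = 1 := by decide
      exact this t.c
    have htm : t.toMatrix = Matrix.transvection t.i t.j t.c := by
      cases t
      rfl
    have hmv : ∀ x : Fin n → ZMod 2,
        t.toMatrix.mulVec x = fun k => if k = t.i then x t.i + t.c * x t.j else x k := by
      intro x
      rw [htm]
      funext k
      rw [Matrix.transvection, Matrix.add_mulVec, Matrix.one_mulVec,
        Matrix.single_mulVec]
      by_cases hk : k = t.i
      · subst hk
        simp
      · simp [hk, Function.update_of_ne hk]
    rcases h01 with h | h
    · -- identity
      have hgid : g = 1 := by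
        apply Equiv.ext
        intro x
        rw [hg x, hmv x]
        funext k
        by_cases hk : k = t.i <;> simp [hk, h]
      rw [hgid, permOp_one]
      exact one_mem _
    · -- CNOT with control t.j, target t.i
      have hne : t.j ≠ t.i := t.hij.symm
      have hgc : g = cnotPerm t.j t.i hne := by
        apply Equiv.ext
        intro x
        rw [hg x, hmv x, cnotPerm_apply]
        funext k
        by_cases hk : k = t.i
        · subst hk
          simp [h, add_comm]
        · simp [hk, Function.update_of_ne hk]
      rw [hgc]
      exact cnot_mem _ _ _
  · -- multiplication
    intro A B hA hB ihA ihB g hg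
    have hAu : IsUnit A.det := isUnit_iff_ne_zero.mpr hA
    have hBu : IsUnit B.det := isUnit_iff_ne_zero.mpr hB
    let gA : Equiv.Perm (Fin n → ZMod 2) :=
      { toFun := A.mulVec
        invFun := A⁻¹.mulVec
        left_inv := fun x => by rw [Matrix.mulVec_mulVec, Matrix.nonsing_inv_mul A hAu,
          Matrix.one_mulVec]
        right_inv := fun x => by rw [Matrix.mulVec_mulVec, Matrix.mul_nonsing_inv A hAu,
          Matrix.one_mulVec] }
    let gB : Equiv.Perm (Fin n → ZMod 2) :=
      { toFun := B.mulVec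
        invFun := B⁻¹.mulVec
        left_inv := fun x => by rw [Matrix.mulVec_mulVec, Matrix.nonsing_inv_mul B hBu,
          Matrix.one_mulVec]
        right_inv := fun x => by rw [Matrix.mulVec_mulVec, Matrix.mul_nonsing_inv B hBu,
          Matrix.one_mulVec] }
    have hgAB : g = gA * gB := by
      apply Equiv.ext
      intro x
      rw [hg x, ← Matrix.mulVec_mulVec]
      rfl
    rw [hgAB, permOp_mul]
    exact mul_mem (ihA gA (fun x => rfl)) (ihB gB (fun x => rfl))

end Aux


theorem stmt9 {n : ℕ} (W : LinearMap.GeneralLinearGroup ℂ (QState n))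
    (a₀ : ZMod 8) (a : Fin n → ZMod 8) (b : Pair n → ZMod 4) (c : Triple n → ZMod 2)
    (p : (Fin n → ZMod 2) → ZMod 8) (hp : ∀ x, p x = pnf a₀ a b c x)
    (f : (Fin n → ZMod 2) ≃ᵃ[ZMod 2] (Fin n → ZMod 2))
    (hW : ∀ x : Fin n → ZMod 2, W.val (e x) = ω ^ (p x).val • e (f x)) :
    W ∈ dihedralGroup' n := by
  classical
  set l := f.linear with hl
  set M := LinearMap.toMatrix' (l : (Fin n → ZMod 2) →ₗ[ZMod 2] (Fin n → ZMod 2)) with hMdef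
  have hMl : ∀ x, M.mulVec x = l x := by
    intro x
    rw [← Matrix.toLin'_apply, hMdef, Matrix.toLin'_toMatrix']
    rfl
  have hMunit : IsUnit M := by
    have hcomp1 : (l : (Fin n → ZMod 2) →ₗ[ZMod 2] (Fin n → ZMod 2)).comp
        (l.symm : (Fin n → ZMod 2) →ₗ[ZMod 2] (Fin n → ZMod 2)) = LinearMap.id := by
      ext v
      simp
    have hcomp2 : (l.symm : (Fin n → ZMod 2) →ₗ[ZMod 2] (Fin n → ZMod 2)).comp
        (l : (Fin n → ZMod 2) →ₗ[ZMod 2] (Fin n → ZMod 2)) = LinearMap.id := by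
      ext v
      simp
    refine ⟨⟨M, LinearMap.toMatrix' (l.symm : (Fin n → ZMod 2) →ₗ[ZMod 2] (Fin n → ZMod 2)),
      ?_, ?_⟩, rfl⟩
    · rw [hMdef, ← LinearMap.toMatrix'_comp, hcomp1, LinearMap.toMatrix'_id]
    · rw [hMdef, ← LinearMap.toMatrix'_comp, hcomp2, LinearMap.toMatrix'_id]
  have hdet : M.det ≠ 0 := by
    intro h0
    have hu := (Matrix.isUnit_iff_isUnit_det M).mp hMunit
    rw [h0] at hu
    exact zero_ne_one (isUnit_zero_iff.mp hu)
  let gl : Equiv.Perm (Fin n → ZMod 2) :=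
    { toFun := fun x => l x
      invFun := fun x => l.symm x
      left_inv := fun x => l.symm_apply_apply x
      right_inv := fun x => l.apply_symm_apply x }
  have hL : permOp gl ∈ dihedralGroup' n := matrix_perm_mem M hdet gl (fun x => (hMl x).symm)
  have hv : ∀ x, f x = l x + f 0 := by
    intro x
    have hd := f.toAffineMap.decomp
    have := congrFun hd x
    simpa [AffineEquiv.coe_toAffineMap, AffineEquiv.linear_toAffineMap] using this
  have hD : phaseOp p ∈ dihedralGroup' n := by
    have hpnf : phaseOp p = phaseOp (fun x => pnf a₀ a b c x) := by
      congr 1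
      funext x
      exact hp x
    rw [hpnf]
    simp only [pnf]
    apply phase_add_mem
    apply phase_add_mem
    apply phase_add_mem
    · -- constant
      have hconst : (fun _ : Fin n → ZMod 2 => a₀) = fun x => a₀ * (1 : ZMod 8) := by
        funext x
        rw [mul_one]
      rw [hconst]
      exact phase_coeff_mem a₀ scalar_mem
    · -- linear terms
      exact phase_sum_mem Finset.univ _ (fun i _ => phase_coeff_mem (a i) (Tgate_mem i))
    · -- pair terms
      refine phase_sum_mem Finset.univ _ (fun q _ => ?_)
      exact phase_nsmul_mem (b q).val (pair_phase_mem _ _ (ne_of_lt q.prop))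
    · -- triple terms
      refine phase_sum_mem Finset.univ _ (fun t _ => ?_)
      exact phase_nsmul_mem (c t).val
        (triple_phase_mem _ _ _ (ne_of_lt (lt_trans t.prop.1 t.prop.2)) (ne_of_lt t.prop.2))
  have hB : transOp (f 0) * permOp gl * phaseOp p ∈ dihedralGroup' n :=
    mul_mem (mul_mem (trans_mem _) hL) hD
  have hWB : W = transOp (f 0) * permOp gl * phaseOp p := by
    apply gl_ext
    intro x
    have hacts := acts_mul (acts_mul (acts_transOp (f 0)) (acts_permOp gl)) (acts_phaseOp p)
    have happ : (transOp (f 0) * permOp gl * phaseOp p).val (e x)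
        = (((ωu : ℂˣ) ^ (p x).val : ℂˣ) : ℂ) • e (f 0 + l x) := by
      simpa [gl] using hacts x
    rw [hW x, happ]
    rw [show f 0 + l x = f x by rw [hv x, add_comm]]
    simp [Units.val_pow_eq_pow_val]
  rw [hWB]
  exact hB
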